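/- For n ≥ 1 and pairwise distinct nonzero constants a_1,…,a_n, define on the 2n-dimensional phase space the functions K(s) = Σ_i (x^i)²/(1+s·a_i), L(s) = Σ_i s·a_i·p_i²/(1+s·a_i), M(s) = Σ_i p_i·x^i/(1+s·a_i), and H(s) = K(s)·L(s) + M(s)². Then for all parameters s, t (avoiding poles), the Poisson bracket {H(s), H(t)} = 0. -/

import Mathlib

open Finset

/-- Partial derivative in the `i`-th position coordinate. -/
noncomputable def pdX {n : ℕ} (i : Fin n)
    (f : (Fin n → ℝ) × (Fin n → ℝ) → ℝ) (z : (Fin n → ℝ) × (Fin n → ℝ)) : ℝ :=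
  deriv (fun t => f (Function.update z.1 i t, z.2)) (z.1 i)

/-- Partial derivative in the `i`-th momentum coordinate. -/
noncomputable def pdP {n : ℕ} (i : Fin n)
    (f : (Fin n → ℝ) × (Fin n → ℝ) → ℝ) (z : (Fin n → ℝ) × (Fin n → ℝ)) : ℝ :=
  deriv (fun t => f (z.1, Function.update z.2 i t)) (z.2 i)

/-- Canonical Poisson bracket `{f, g} = ∑ i, (∂f/∂p_i · ∂g/∂x^i − ∂f/∂x^i · ∂g/∂p_i)`. -/
noncomputable def pb {n : ℕ} (f g : (Fin n → ℝ) × (Fin n → ℝ) → ℝ)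
    (z : (Fin n → ℝ) × (Fin n → ℝ)) : ℝ :=
  ∑ i, (pdP i f z * pdX i g z - pdX i f z * pdP i g z)

/-- `K(s) = ∑ i (x^i)²/(1+s·a_i)`. -/
noncomputable def Kf {n : ℕ} (a : Fin n → ℝ) (s : ℝ)
    (z : (Fin n → ℝ) × (Fin n → ℝ)) : ℝ :=
  ∑ i, (z.1 i) ^ 2 / (1 + s * a i)

/-- `L(s) = ∑ i s·a_i·p_i²/(1+s·a_i)`. -/
noncomputable def Lf {n : ℕ} (a : Fin n → ℝ) (s : ℝ)
    (z : (Fin n → ℝ) × (Fin n → ℝ)) : ℝ :=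
  ∑ i, s * a i * (z.2 i) ^ 2 / (1 + s * a i)

/-- `M(s) = ∑ i p_i·x^i/(1+s·a_i)`. -/
noncomputable def Mf {n : ℕ} (a : Fin n → ℝ) (s : ℝ)
    (z : (Fin n → ℝ) × (Fin n → ℝ)) : ℝ :=
  ∑ i, z.2 i * z.1 i / (1 + s * a i)

/-- `H(s) = K(s)·L(s) + M(s)²`. -/
noncomputable def Hf {n : ℕ} (a : Fin n → ℝ) (s : ℝ)
    (z : (Fin n → ℝ) × (Fin n → ℝ)) : ℝ :=
  Kf a s z * Lf a s z + (Mf a s z) ^ 2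

/-- Derivative of a sum where only the `i`-th coordinate varies. -/
lemma hasDerivAt_sum_update {n : ℕ} (g : Fin n → ℝ) (i : Fin n)
    (h : Fin n → ℝ → ℝ) (d : ℝ) (hd : HasDerivAt (h i) d (g i)) :
    HasDerivAt (fun u => ∑ j, h j (Function.update g i u j)) d (g i) := by
  have heq : (fun u => ∑ j, h j (Function.update g i u j))
      = fun u => h i u + ∑ j ∈ univ.erase i, h j (g j) := by
    funext u
    rw [← Finset.add_sum_erase _ (fun j => h j (Function.update g i u j)) (mem_univ i)]
    congr 1
    · rw [Function.update_self]
    · exact Finset.sum_congr rfl fun j hj => by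
        rw [Function.update_of_ne (Finset.ne_of_mem_erase hj)]
  rw [heq]
  exact hd.add_const _

lemma hK_x {n : ℕ} (a : Fin n → ℝ) (s : ℝ) (z : (Fin n → ℝ) × (Fin n → ℝ)) (i : Fin n) :
    HasDerivAt (fun u => Kf a s (Function.update z.1 i u, z.2))
      (2 * z.1 i / (1 + s * a i)) (z.1 i) :=
  hasDerivAt_sum_update z.1 i (fun j w => w ^ 2 / (1 + s * a j))
    (2 * z.1 i / (1 + s * a i))
    (by simpa using (hasDerivAt_pow 2 (z.1 i)).div_const (1 + s * a i))

lemma hM_x {n : ℕ} (a : Fin n → ℝ) (s : ℝ) (z : (Fin n → ℝ) × (Fin n → ℝ)) (i : Fin n) :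
    HasDerivAt (fun u => Mf a s (Function.update z.1 i u, z.2))
      (z.2 i / (1 + s * a i)) (z.1 i) :=
  hasDerivAt_sum_update z.1 i (fun j w => z.2 j * w / (1 + s * a j))
    (z.2 i / (1 + s * a i))
    (by simpa using ((hasDerivAt_id (z.1 i)).const_mul (z.2 i)).div_const (1 + s * a i))

lemma hL_p {n : ℕ} (a : Fin n → ℝ) (s : ℝ) (z : (Fin n → ℝ) × (Fin n → ℝ)) (i : Fin n) :
    HasDerivAt (fun u => Lf a s (z.1, Function.update z.2 i u))
      (2 * (s * a i * z.2 i) / (1 + s * a i)) (z.2 i) := by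
  have h0 : HasDerivAt (fun w : ℝ => s * a i * w ^ 2 / (1 + s * a i))
      (2 * (s * a i * z.2 i) / (1 + s * a i)) (z.2 i) := by
    have := ((hasDerivAt_pow 2 (z.2 i)).const_mul (s * a i)).div_const (1 + s * a i)
    refine this.congr_deriv ?_
    ring
  exact hasDerivAt_sum_update z.2 i (fun j w => s * a j * w ^ 2 / (1 + s * a j)) _ h0

lemma hM_p {n : ℕ} (a : Fin n → ℝ) (s : ℝ) (z : (Fin n → ℝ) × (Fin n → ℝ)) (i : Fin n) :
    HasDerivAt (fun u => Mf a s (z.1, Function.update z.2 i u))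
      (z.1 i / (1 + s * a i)) (z.2 i) :=
  hasDerivAt_sum_update z.2 i (fun j w => w * z.1 j / (1 + s * a j))
    (z.1 i / (1 + s * a i))
    (by simpa using ((hasDerivAt_id (z.2 i)).mul_const (z.1 i)).div_const (1 + s * a i))

lemma pdX_H {n : ℕ} (a : Fin n → ℝ) (s : ℝ) (z : (Fin n → ℝ) × (Fin n → ℝ)) (i : Fin n) :
    pdX i (Hf a s) z
      = 2 * z.1 i / (1 + s * a i) * Lf a s z + 2 * Mf a s z * (z.2 i / (1 + s * a i)) := by
  have hL : HasDerivAt (fun u => Lf a s (Function.update z.1 i u, z.2)) 0 (z.1 i) :=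
    hasDerivAt_const (z.1 i) (Lf a s z)
  have h : HasDerivAt (fun u => Hf a s (Function.update z.1 i u, z.2))
      (2 * z.1 i / (1 + s * a i) * Lf a s (Function.update z.1 i (z.1 i), z.2)
        + Kf a s (Function.update z.1 i (z.1 i), z.2) * 0
        + 2 * Mf a s (Function.update z.1 i (z.1 i), z.2) ^ 1 * (z.2 i / (1 + s * a i)))
      (z.1 i) := ((hK_x a s z i).mul hL).add ((hM_x a s z i).pow 2)
  have hd := h.deriv
  unfold pdX
  rw [hd]
  simp [Function.update_eq_self]

lemma pdP_H {n : ℕ} (a : Fin n → ℝ) (s : ℝ) (z : (Fin n → ℝ) × (Fin n → ℝ)) (i : Fin n) :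
    pdP i (Hf a s) z
      = Kf a s z * (2 * (s * a i * z.2 i) / (1 + s * a i))
        + 2 * Mf a s z * (z.1 i / (1 + s * a i)) := by
  have hK : HasDerivAt (fun u => Kf a s (z.1, Function.update z.2 i u)) 0 (z.2 i) :=
    hasDerivAt_const (z.2 i) (Kf a s z)
  have h : HasDerivAt (fun u => Hf a s (z.1, Function.update z.2 i u))
      (0 * Lf a s (z.1, Function.update z.2 i (z.2 i))
        + Kf a s (z.1, Function.update z.2 i (z.2 i)) * (2 * (s * a i * z.2 i) / (1 + s * a i))
        + 2 * Mf a s (z.1, Function.update z.2 i (z.2 i)) ^ 1 * (z.1 i / (1 + s * a i)))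
      (z.2 i) := (hK.mul (hL_p a s z i)).add ((hM_p a s z i).pow 2)
  have hd := h.deriv
  unfold pdP
  rw [hd]
  simp [Function.update_eq_self]

/-- The Hamiltonians `H(s)` Poisson commute: `{H(s), H(t)} = 0`. -/
theorem stmt1 {n : ℕ} (hn : 1 ≤ n) (a : Fin n → ℝ)
    (hnz : ∀ i, a i ≠ 0) (hdist : ∀ i j, i ≠ j → a i ≠ a j)
    (s t : ℝ) (hs : ∀ i, 1 + s * a i ≠ 0) (ht : ∀ i, 1 + t * a i ≠ 0) :
    ∀ z : (Fin n → ℝ) × (Fin n → ℝ), pb (Hf a s) (Hf a t) z = 0 := by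
  intro z
  rcases eq_or_ne s t with rfl | hst
  · exact Finset.sum_eq_zero fun i _ => by ring
  · have hst' : s - t ≠ 0 := sub_ne_zero.mpr hst
    have key : (s - t) * pb (Hf a s) (Hf a t) z = 0 := by
      unfold pb
      rw [Finset.mul_sum]
      have hterm : ∀ i ∈ (univ : Finset (Fin n)),
          (s - t) * (pdP i (Hf a s) z * pdX i (Hf a t) z
              - pdX i (Hf a s) z * pdP i (Hf a t) z)
          = (4 * (s * Kf a s z * Lf a t z - t * Kf a t z * Lf a s z))
                * (z.2 i * z.1 i / (1 + t * a i))
            - (4 * (s * Kf a s z * Lf a t z - t * Kf a t z * Lf a s z))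
                * (z.2 i * z.1 i / (1 + s * a i))
            + ((4 * (s * Kf a s z * Mf a t z - t * Kf a t z * Mf a s z))
                * (s * a i * (z.2 i) ^ 2 / (1 + s * a i))
            - (4 * (s * Kf a s z * Mf a t z - t * Kf a t z * Mf a s z))
                * (t * a i * (z.2 i) ^ 2 / (1 + t * a i)))
            + ((4 * s * (Mf a s z * Lf a t z - Lf a s z * Mf a t z))
                * ((z.1 i) ^ 2 / (1 + s * a i))
            - (4 * t * (Mf a s z * Lf a t z - Lf a s z * Mf a t z))
                * ((z.1 i) ^ 2 / (1 + t * a i))) := by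
        intro i _
        rw [pdX_H, pdX_H, pdP_H, pdP_H]
        have hα := hs i
        have hβ := ht i
        field_simp
        ring
      rw [Finset.sum_congr rfl hterm]
      rw [Finset.sum_add_distrib, Finset.sum_add_distrib, Finset.sum_sub_distrib,
        Finset.sum_sub_distrib, Finset.sum_sub_distrib,
        ← Finset.mul_sum, ← Finset.mul_sum, ← Finset.mul_sum, ← Finset.mul_sum,
        ← Finset.mul_sum, ← Finset.mul_sum]
      have eMt : (∑ i, z.2 i * z.1 i / (1 + t * a i)) = Mf a t z := rfl
      have eMs : (∑ i, z.2 i * z.1 i / (1 + s * a i)) = Mf a s z := rfl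
      have eLs : (∑ i, s * a i * (z.2 i) ^ 2 / (1 + s * a i)) = Lf a s z := rfl
      have eLt : (∑ i, t * a i * (z.2 i) ^ 2 / (1 + t * a i)) = Lf a t z := rfl
      have eKs : (∑ i, (z.1 i) ^ 2 / (1 + s * a i)) = Kf a s z := rfl
      have eKt : (∑ i, (z.1 i) ^ 2 / (1 + t * a i)) = Kf a t z := rfl
      rw [eMt, eMs, eLs, eLt, eKs, eKt]
      ring
    exact (mul_eq_zero.mp key).resolve_left hst'
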